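/- arXiv:2204.08300 — 3 statements merged into one kernel-verified Lean document; each statement's English description precedes it below -/
import Mathlib

section
/- For any draft rule φ^π, any agent i, any available set X, any truthful preference ≿_i, and any misreport ≿'_i, if all other agents report the same preference as i's truthful preference ≿_i, then i's truthful bundle pairwise-dominates her misreporting bundle: φ^π_i((≿_i, ≿_{-i}), X) ≿_i^PD φ^π_i((≿'_i, ≿_{-i}), X), where ≿_j = ≿_i for all j ≠ i. -/
open Finset

noncomputable section

abbrev Obj := ℕ

def PD (r : Obj → Obj → Prop) (S T : Finset Obj) : Prop :=
  ∃ μ : {x // x ∈ T} → {x // x ∈ S}, Function.Injective μ ∧ ∀ x, r (μ x).1 x.1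

def StrictPD (r : Obj → Obj → Prop) (S T : Finset Obj) : Prop :=
  PD r S T ∧ ¬ PD r T S

def LinProfile {n : ℕ} (pref : Fin n → Obj → Obj → Prop) : Prop :=
  ∀ i, IsLinearOrder Obj (pref i)

def IsAlloc {n : ℕ} (A : Fin n → Finset Obj) (X : Finset Obj) : Prop :=
  (∀ i, A i ⊆ X) ∧ ∀ i j, i ≠ j → Disjoint (A i) (A j)

open Classical in
def topOf (r : Obj → Obj → Prop) (X : Finset Obj) : Obj :=
  if h : ∃ m ∈ X, ∀ x ∈ X, r m x then h.choose else 0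

def remaining {n : ℕ} (pref : Fin n → Obj → Obj → Prop) (f : ℕ → Fin n)
    (X : Finset Obj) : ℕ → Finset Obj
  | 0 => X
  | k + 1 => (remaining pref f X k).erase (topOf (pref (f k)) (remaining pref f X k))

def draft {n : ℕ} (pref : Fin n → Obj → Obj → Prop) (f : ℕ → Fin n)
    (X : Finset Obj) (i : Fin n) : Finset Obj :=
  ((Finset.range X.card).filter (fun k => f k = i)).image
    (fun k => topOf (pref (f k)) (remaining pref f X k))

def roundRobin {n : ℕ} (hn : 0 < n) (π : Equiv.Perm (Fin n)) (k : ℕ) : Fin n :=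
  π.symm ⟨k % n, Nat.mod_lt k hn⟩

def draftPi {n : ℕ} (hn : 0 < n) (pref : Fin n → Obj → Obj → Prop)
    (π : Equiv.Perm (Fin n)) (X : Finset Obj) (i : Fin n) : Finset Obj :=
  draft pref (roundRobin hn π) X i


namespace DraftAux

lemma exists_rel_max {r : Obj → Obj → Prop} (hr : IsLinearOrder Obj r) :
    ∀ X : Finset Obj, X.Nonempty → ∃ m ∈ X, ∀ x ∈ X, r m x := by
  haveI := hr
  intro X
  induction X using Finset.induction_on with
  | empty => rintro ⟨x, hx⟩; exact absurd hx (Finset.notMem_empty x)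
  | @insert a s ha ih =>
    intro _
    rcases s.eq_empty_or_nonempty with hs | hs
    · subst hs
      refine ⟨a, Finset.mem_insert_self _ _, ?_⟩
      intro x hx
      rcases Finset.mem_insert.1 hx with rfl | hx
      · exact refl_of r x
      · exact absurd hx (Finset.notMem_empty x)
    · obtain ⟨m, hm, hmax⟩ := ih hs
      rcases total_of r m a with h | h
      · refine ⟨m, Finset.mem_insert_of_mem hm, ?_⟩
        intro x hx
        rcases Finset.mem_insert.1 hx with rfl | hx
        · exact h
        · exact hmax x hx
      · refine ⟨a, Finset.mem_insert_self _ _, ?_⟩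
        intro x hx
        rcases Finset.mem_insert.1 hx with rfl | hx
        · exact refl_of r x
        · exact trans_of r h (hmax x hx)

lemma topOf_spec {r : Obj → Obj → Prop} (hr : IsLinearOrder Obj r) {X : Finset Obj}
    (hX : X.Nonempty) : topOf r X ∈ X ∧ ∀ x ∈ X, r (topOf r X) x := by
  have h := exists_rel_max hr X hX
  rw [topOf, dif_pos h]
  exact h.choose_spec

/-- the object picked at step `k` -/
def pick {n : ℕ} (pref : Fin n → Obj → Obj → Prop) (f : ℕ → Fin n)
    (X : Finset Obj) (k : ℕ) : Obj :=
  topOf (pref (f k)) (remaining pref f X k)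

variable {n : ℕ} {pref : Fin n → Obj → Obj → Prop} {f : ℕ → Fin n} {X : Finset Obj}

lemma remaining_succ (k : ℕ) :
    remaining pref f X (k + 1) = (remaining pref f X k).erase (pick pref f X k) := rfl

lemma remaining_mono {k l : ℕ} (h : k ≤ l) :
    remaining pref f X l ⊆ remaining pref f X k := by
  induction l with
  | zero => simp_all
  | succ l ih =>
    rcases Nat.lt_or_ge k (l + 1) with h' | h'
    · exact (Finset.erase_subset _ _).trans (ih (Nat.lt_succ_iff.1 h'))
    · have : k = l + 1 := le_antisymm h h'
      subst this; exact subset_rfl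

lemma remaining_subset (k : ℕ) : remaining pref f X k ⊆ X :=
  remaining_mono (Nat.zero_le k)

lemma remaining_card (hpref : ∀ j, IsLinearOrder Obj (pref j)) :
    ∀ k, k ≤ X.card → (remaining pref f X k).card = X.card - k := by
  intro k
  induction k with
  | zero => simp [remaining]
  | succ k ih =>
    intro hk
    have hk' : k < X.card := Nat.lt_of_succ_le hk
    have hc := ih (le_of_lt hk')
    have hne : (remaining pref f X k).Nonempty := by
      rw [← Finset.card_pos, hc]; omega
    have hmem : pick pref f X k ∈ remaining pref f X k := (topOf_spec (hpref (f k)) hne).1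
    rw [remaining_succ, Finset.card_erase_of_mem hmem, hc]
    omega

lemma pick_mem (hpref : ∀ j, IsLinearOrder Obj (pref j)) {k : ℕ} (hk : k < X.card) :
    pick pref f X k ∈ remaining pref f X k := by
  have hne : (remaining pref f X k).Nonempty := by
    rw [← Finset.card_pos, remaining_card hpref k (le_of_lt hk)]; omega
  exact (topOf_spec (hpref (f k)) hne).1

lemma pick_mem_X (hpref : ∀ j, IsLinearOrder Obj (pref j)) {k : ℕ} (hk : k < X.card) :
    pick pref f X k ∈ X := remaining_subset k (pick_mem hpref hk)

lemma pick_top {k : ℕ} (hne : (remaining pref f X k).Nonempty)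
    (hlin : IsLinearOrder Obj (pref (f k))) :
    ∀ x ∈ remaining pref f X k, pref (f k) (pick pref f X k) x :=
  (topOf_spec hlin hne).2

lemma pick_injOn (hpref : ∀ j, IsLinearOrder Obj (pref j)) :
    ∀ k < X.card, ∀ l < X.card, pick pref f X k = pick pref f X l → k = l := by
  have key : ∀ k l, k < l → l < X.card → pick pref f X k ≠ pick pref f X l := by
    intro k l hkl hl heq
    have h1 : pick pref f X l ∈ remaining pref f X l := pick_mem hpref hl
    have h2 : remaining pref f X l ⊆ remaining pref f X (k + 1) := remaining_mono hkl
    have h3 : pick pref f X k ∉ remaining pref f X (k + 1) := by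
      rw [remaining_succ]; exact Finset.notMem_erase _ _
    exact h3 (heq ▸ h2 h1)
  intro k hk l hl heq
  rcases Nat.lt_trichotomy k l with h | h | h
  · exact absurd heq (key k l h hl)
  · exact h
  · exact absurd heq.symm (key l k h hk)

lemma draft_subset (hpref : ∀ j, IsLinearOrder Obj (pref j)) (i : Fin n) :
    draft pref f X i ⊆ X := by
  intro x hx
  rw [draft] at hx
  obtain ⟨k, hk, rfl⟩ := Finset.mem_image.1 hx
  have hk' := Finset.mem_range.1 (Finset.mem_filter.1 hk).1
  exact pick_mem_X hpref hk'

/-! ## ranks -/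

open Classical in
def rk (r : Obj → Obj → Prop) (X : Finset Obj) (x : Obj) : ℕ :=
  (X.filter (fun y => r y x ∧ y ≠ x)).card

variable {r : Obj → Obj → Prop}

lemma rk_lt_rk (hr : IsLinearOrder Obj r) {x y : Obj} (hx : x ∈ X) (hy : y ∈ X)
    (hxy : x ≠ y) (h : r x y) : rk r X x < rk r X y := by
  haveI := hr
  classical
  simp only [rk]
  apply Finset.card_lt_card
  constructor
  · intro z hz
    rcases Finset.mem_filter.1 hz with ⟨hzX, hzx, hzne⟩
    refine Finset.mem_filter.2 ⟨hzX, trans_of r hzx h, ?_⟩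
    rintro rfl
    exact hxy (antisymm_of r h hzx)
  · intro hsub
    have : x ∈ X.filter (fun z => r z y ∧ z ≠ y) := Finset.mem_filter.2 ⟨hx, h, hxy⟩
    have hx' := hsub this
    rcases Finset.mem_filter.1 hx' with ⟨-, -, hne⟩
    exact hne rfl

lemma rk_le_imp (hr : IsLinearOrder Obj r) {x y : Obj} (hx : x ∈ X) (hy : y ∈ X)
    (h : rk r X x ≤ rk r X y) : r x y := by
  haveI := hr
  by_contra hxy
  have hne : y ≠ x := by rintro rfl; exact hxy (refl_of r _)
  have hyx : r y x := (total_of r x y).resolve_left hxy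
  exact absurd (rk_lt_rk hr hy hx hne hyx) (by omega)

lemma rk_injOn (hr : IsLinearOrder Obj r) {x y : Obj} (hx : x ∈ X) (hy : y ∈ X)
    (h : rk r X x = rk r X y) : x = y := by
  haveI := hr
  by_contra hxy
  rcases total_of r x y with h' | h'
  · exact absurd (rk_lt_rk hr hx hy hxy h') (by omega)
  · exact absurd (rk_lt_rk hr hy hx (Ne.symm hxy) h') (by omega)

lemma rk_lt_card {x : Obj} (hx : x ∈ X) : rk r X x < X.card := by
  classical
  simp only [rk]
  have hsub : X.filter (fun y => r y x ∧ y ≠ x) ⊆ X.erase x := by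
    intro z hz
    rcases Finset.mem_filter.1 hz with ⟨hzX, -, hzne⟩
    exact Finset.mem_erase.2 ⟨hzne, hzX⟩
  calc _ ≤ (X.erase x).card := Finset.card_le_card hsub
    _ < X.card := by
        rw [Finset.card_erase_of_mem hx]
        have : 0 < X.card := Finset.card_pos.2 ⟨x, hx⟩
        omega

lemma rk_image (hr : IsLinearOrder Obj r) : X.image (rk r X) = Finset.range X.card := by
  apply Finset.eq_of_subset_of_card_le
  · intro m hm
    obtain ⟨x, hx, rfl⟩ := Finset.mem_image.1 hm
    exact Finset.mem_range.2 (rk_lt_card hx)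
  · rw [Finset.card_range, Finset.card_image_of_injOn (fun x hx y hy => rk_injOn hr hx hy)]

lemma card_rk_lt (hr : IsLinearOrder Obj r) {M : ℕ} (hM : M ≤ X.card) :
    (X.filter (fun x => rk r X x < M)).card = M := by
  classical
  have h1 : (X.filter (fun x => rk r X x < M)).card
      = ((X.filter (fun x => rk r X x < M)).image (rk r X)).card := by
    rw [Finset.card_image_of_injOn]
    intro x hx y hy
    exact rk_injOn hr (Finset.mem_filter.1 hx).1 (Finset.mem_filter.1 hy).1
  rw [h1]
  have h2 : (X.filter (fun x => rk r X x < M)).image (rk r X)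
      = (X.image (rk r X)).filter (fun m => m < M) := by
    rw [Finset.filter_image]
  rw [h2, rk_image hr]
  have h3 : (Finset.range X.card).filter (fun m => m < M) = Finset.range M := by
    ext m
    simp only [Finset.mem_filter, Finset.mem_range]
    omega
  rw [h3, Finset.card_range]

/-! ## the truthful run: everyone reports `r` -/

lemma removed_beats (hr : IsLinearOrder Obj r) (f : ℕ → Fin n) :
    ∀ k, ∀ a ∈ X, a ∉ remaining (fun _ : Fin n => r) f X k →
      ∀ b ∈ remaining (fun _ : Fin n => r) f X k, r a b ∧ a ≠ b := by
  intro k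
  induction k with
  | zero => intro a haX ha; exact absurd haX ha
  | succ k ih =>
    intro a haX ha b hb
    rw [remaining_succ] at hb ha
    rcases Finset.mem_erase.1 hb with ⟨hbp, hbR⟩
    by_cases haR : a ∈ remaining (fun _ : Fin n => r) f X k
    · have hap : a = pick (fun _ : Fin n => r) f X k := by
        by_contra hne
        exact ha (Finset.mem_erase.2 ⟨hne, haR⟩)
      subst hap
      have hne : (remaining (fun _ : Fin n => r) f X k).Nonempty := ⟨b, hbR⟩
      exact ⟨pick_top hne hr b hbR, fun h => hbp h.symm⟩
    · exact ih a haX haR b hbR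

lemma rk_pick_true (hr : IsLinearOrder Obj r) (f : ℕ → Fin n) {k : ℕ} (hk : k < X.card) :
    rk r X (pick (fun _ : Fin n => r) f X k) = k := by
  classical
  haveI := hr
  have hpref : ∀ j : Fin n, IsLinearOrder Obj ((fun _ : Fin n => r) j) := fun _ => hr
  set p := pick (fun _ : Fin n => r) f X k with hp
  have hpR : p ∈ remaining (fun _ : Fin n => r) f X k := pick_mem hpref hk
  have hne : (remaining (fun _ : Fin n => r) f X k).Nonempty := ⟨p, hpR⟩
  have hset : X.filter (fun y => r y p ∧ y ≠ p) = X \ remaining (fun _ : Fin n => r) f X k := by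
    ext z
    simp only [Finset.mem_filter, Finset.mem_sdiff]
    constructor
    · rintro ⟨hzX, hzp, hzne⟩
      refine ⟨hzX, fun hzR => ?_⟩
      exact hzne (antisymm_of r hzp (pick_top hne hr z hzR))
    · rintro ⟨hzX, hzR⟩
      exact ⟨hzX, removed_beats hr f k z hzX hzR p hpR⟩
  rw [rk, hset, Finset.card_sdiff_of_subset (remaining_subset k),
    remaining_card hpref k (le_of_lt hk)]
  omega

/-! ## the possibly-misreporting run -/

/-- Key counting lemma: in a run where every agent other than `i` reports `r`,
the number of objects of rank `< M` that `i` gets is at most the number of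
turns of `i` among the first `M` steps. -/
lemma count_key (hr : IsLinearOrder Obj r) (hpref : ∀ j, IsLinearOrder Obj (pref j))
    (i : Fin n) (hothers : ∀ k, f k ≠ i → pref (f k) = r) {M : ℕ} (hM : M ≤ X.card) :
    ((draft pref f X i).filter (fun y => rk r X y < M)).card
      ≤ ((Finset.range X.card).filter (fun k => f k = i ∧ k < M)).card := by
  classical
  haveI := hr
  set Ki := (Finset.range X.card).filter (fun k => f k = i) with hKi
  have hKisub : Ki ⊆ Finset.range X.card := Finset.filter_subset _ _
  set g := pick pref f X with hg
  have hinj : ∀ k ∈ Finset.range X.card, ∀ l ∈ Finset.range X.card, g k = g l → k = l := by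
    intro k hk l hl
    exact pick_injOn hpref k (Finset.mem_range.1 hk) l (Finset.mem_range.1 hl)
  have hTfilt : (draft pref f X i).filter (fun y => rk r X y < M)
      = (Ki.filter (fun k => rk r X (g k) < M)).image g := by
    rw [draft, ← hKi]
    rw [Finset.filter_image]
    rfl
  set KiB := Ki.filter (fun k => rk r X (g k) < M) with hKiB
  have hKiBsub : KiB ⊆ Finset.range X.card := (Finset.filter_subset _ _).trans hKisub
  have hcard1 : ((draft pref f X i).filter (fun y => rk r X y < M)).card = KiB.card := by
    rw [hTfilt]
    exact Finset.card_image_of_injOn (fun k hk l hl => hinj k (hKiBsub hk) l (hKiBsub hl))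
  rw [hcard1]
  by_cases hsurv : ∃ b ∈ remaining pref f X M, rk r X b < M
  · -- survivor case
    obtain ⟨b, hbR, hbrk⟩ := hsurv
    have hbX : b ∈ X := remaining_subset M hbR
    set B := X.filter (fun x => rk r X x < M) with hB
    have hBcard : B.card = M := card_rk_lt hr hM
    set N := (Finset.range X.card).filter (fun k => ¬ f k = i ∧ k < M) with hN
    have hNsub : N ⊆ Finset.range X.card := Finset.filter_subset _ _
    -- every pick at a step in N lands in B
    have hNB : ∀ k ∈ N, g k ∈ B := by
      intro k hk
      rcases Finset.mem_filter.1 hk with ⟨hkr, hkni, hkM⟩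
      have hkX : k < X.card := Finset.mem_range.1 hkr
      have hbRk : b ∈ remaining pref f X k := remaining_mono (le_of_lt hkM) hbR
      have hne : (remaining pref f X k).Nonempty := ⟨b, hbRk⟩
      have hlin : IsLinearOrder Obj (pref (f k)) := hpref (f k)
      have htop := pick_top hne hlin b hbRk
      rw [hothers k hkni] at htop
      have hgb : g k ≠ b := by
        intro h
        have : b ∈ remaining pref f X (k+1) := remaining_mono hkM hbR
        rw [remaining_succ, ← h] at this
        exact (Finset.notMem_erase _ _) this
      have hgX : g k ∈ X := pick_mem_X hpref hkX
      have := rk_lt_rk hr hgX hbX hgb htop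
      exact Finset.mem_filter.2 ⟨hgX, by omega⟩
    have hKiBB : ∀ k ∈ KiB, g k ∈ B := by
      intro k hk
      rcases Finset.mem_filter.1 hk with ⟨hkKi, hkrk⟩
      exact Finset.mem_filter.2 ⟨pick_mem_X hpref (Finset.mem_range.1 (hKisub hkKi)), hkrk⟩
    -- the two image sets are disjoint subsets of B
    have hdisj : Disjoint (N.image g) (KiB.image g) := by
      rw [Finset.disjoint_left]
      intro x hxN hxK
      obtain ⟨k, hk, rfl⟩ := Finset.mem_image.1 hxN
      obtain ⟨l, hl, hgl⟩ := Finset.mem_image.1 hxK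
      have : l = k := hinj l (hKiBsub hl) k (hNsub hk) hgl
      subst this
      exact (Finset.mem_filter.1 hk).2.1 (Finset.mem_filter.1 ((Finset.filter_subset _ _) hl)).2
    have hunion : (N.image g) ∪ (KiB.image g) ⊆ B := by
      intro x hx
      rcases Finset.mem_union.1 hx with hx | hx
      · obtain ⟨k, hk, rfl⟩ := Finset.mem_image.1 hx; exact hNB k hk
      · obtain ⟨k, hk, rfl⟩ := Finset.mem_image.1 hx; exact hKiBB k hk
    have hcardN : (N.image g).card = N.card :=
      Finset.card_image_of_injOn (fun k hk l hl => hinj k (hNsub hk) l (hNsub hl))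
    have hcardK : (KiB.image g).card = KiB.card :=
      Finset.card_image_of_injOn (fun k hk l hl => hinj k (hKiBsub hk) l (hKiBsub hl))
    have hsum : N.card + KiB.card ≤ M := by
      have := Finset.card_le_card hunion
      rw [Finset.card_union_of_disjoint hdisj, hcardN, hcardK] at this
      omega
    -- N.card = M - (number of i-steps < M)
    have hpart : N.card + ((Finset.range X.card).filter (fun k => f k = i ∧ k < M)).card = M := by
      have h1 : Disjoint N ((Finset.range X.card).filter (fun k => f k = i ∧ k < M)) := by
        rw [Finset.disjoint_left]
        intro k hk hk'
        exact (Finset.mem_filter.1 hk).2.1 (Finset.mem_filter.1 hk').2.1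
      have h2 : N ∪ (Finset.range X.card).filter (fun k => f k = i ∧ k < M)
          = (Finset.range X.card).filter (fun k => k < M) := by
        ext k
        simp only [hN, Finset.mem_union, Finset.mem_filter, Finset.mem_range]
        by_cases h : f k = i <;> simp [h] <;> tauto
      have h3 : (Finset.range X.card).filter (fun k => k < M) = Finset.range M := by
        ext k
        simp only [Finset.mem_filter, Finset.mem_range]
        omega
      have := Finset.card_union_of_disjoint h1
      rw [h2, h3, Finset.card_range] at this
      omega
    omega
  · -- no survivor: every low-rank object is gone by step M, so i's low-rank picks
    -- all happened before step M
    push_neg at hsurv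
    apply Finset.card_le_card
    intro k hk
    rcases Finset.mem_filter.1 hk with ⟨hkKi, hkrk⟩
    rcases Finset.mem_filter.1 hkKi with ⟨hkr, hkfi⟩
    refine Finset.mem_filter.2 ⟨hkr, hkfi, ?_⟩
    by_contra hkM
    push_neg at hkM
    have : g k ∈ remaining pref f X M :=
      remaining_mono hkM (pick_mem hpref (Finset.mem_range.1 hkr))
    exact absurd hkrk (by simpa using hsurv (g k) this)

lemma draft_card (hpref : ∀ j, IsLinearOrder Obj (pref j)) (i : Fin n) :
    (draft pref f X i).card = ((Finset.range X.card).filter (fun k => f k = i)).card := by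
  rw [draft]
  apply Finset.card_image_of_injOn
  intro k hk l hl
  exact pick_injOn hpref k (Finset.mem_range.1 ((Finset.filter_subset _ _) hk)) l
    (Finset.mem_range.1 ((Finset.filter_subset _ _) hl))

lemma count_all (hr : IsLinearOrder Obj r) (hpref : ∀ j, IsLinearOrder Obj (pref j))
    (i : Fin n) (hothers : ∀ k, f k ≠ i → pref (f k) = r) (M : ℕ) :
    ((draft pref f X i).filter (fun y => rk r X y < M)).card
      ≤ ((draft (fun _ : Fin n => r) f X i).filter (fun y => rk r X y < M)).card := by
  classical
  have hprefr : ∀ j : Fin n, IsLinearOrder Obj ((fun _ : Fin n => r) j) := fun _ => hr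
  set Ki := (Finset.range X.card).filter (fun k => f k = i) with hKi
  have hKisub : Ki ⊆ Finset.range X.card := Finset.filter_subset _ _
  rcases le_or_gt M X.card with hM | hM
  · -- compute the truthful side exactly
    have hS : ((draft (fun _ : Fin n => r) f X i).filter (fun y => rk r X y < M)).card
        = ((Finset.range X.card).filter (fun k => f k = i ∧ k < M)).card := by
      rw [draft, ← hKi, Finset.filter_image]
      rw [Finset.card_image_of_injOn]
      · congr 1
        ext k
        simp only [hKi, Finset.mem_filter, Finset.mem_range]
        constructor
        · rintro ⟨⟨hkX, hki⟩, hrk⟩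
          refine ⟨hkX, hki, ?_⟩
          have hpk : rk r X (topOf r (remaining (fun _ : Fin n => r) f X k)) = k :=
            rk_pick_true hr f hkX
          rwa [hpk] at hrk
        · rintro ⟨hkX, hki, hkM⟩
          have hpk : rk r X (topOf r (remaining (fun _ : Fin n => r) f X k)) = k :=
            rk_pick_true hr f hkX
          exact ⟨⟨hkX, hki⟩, by rw [hpk]; exact hkM⟩
      · intro k hk l hl
        have hk' := Finset.mem_range.1 (hKisub ((Finset.filter_subset _ _) hk))
        have hl' := Finset.mem_range.1 (hKisub ((Finset.filter_subset _ _) hl))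
        exact pick_injOn hprefr k hk' l hl'
    rw [hS]
    exact count_key hr hpref i hothers hM
  · -- trivial case: the truthful side is everything
    have hS : (draft (fun _ : Fin n => r) f X i).filter (fun y => rk r X y < M)
        = draft (fun _ : Fin n => r) f X i := by
      apply Finset.filter_true_of_mem
      intro x hx
      have := rk_lt_card (X := X) (r := r) (draft_subset hprefr i hx)
      omega
    calc ((draft pref f X i).filter (fun y => rk r X y < M)).card
        ≤ (draft pref f X i).card := Finset.card_le_card (Finset.filter_subset _ _)
      _ = Ki.card := draft_card hpref i
      _ = (draft (fun _ : Fin n => r) f X i).card := (draft_card hprefr i).symm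
      _ = _ := by rw [hS]

end DraftAux

theorem draft_truthful_vs_misreport_identical_others {n : ℕ} (hn : 0 < n)
    (π : Equiv.Perm (Fin n)) (X : Finset Obj) (hX : X.Nonempty) (i : Fin n)
    (r : Obj → Obj → Prop) (hr : IsLinearOrder Obj r)
    (r' : Obj → Obj → Prop) (hr' : IsLinearOrder Obj r') :
    PD r (draftPi hn (fun _ => r) π X i)
      (draftPi hn (Function.update (fun _ => r) i r') π X i) := by
  classical
  set f := roundRobin hn π with hf
  set pref' := Function.update (fun _ : Fin n => r) i r' with hpref'def
  have hpref' : ∀ j, IsLinearOrder Obj (pref' j) := by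
    intro j
    by_cases h : j = i
    · subst h
      simpa [hpref'def, Function.update_self] using hr'
    · simpa [hpref'def, Function.update_of_ne h] using hr
  have hothers : ∀ k, f k ≠ i → pref' (f k) = r := by
    intro k h
    simp [hpref'def, Function.update_of_ne h]
  set S := draft (fun _ : Fin n => r) f X i with hS
  set T := draft pref' f X i with hT
  show PD r S T
  have hSX : S ⊆ X := DraftAux.draft_subset (fun _ => hr) i
  have hTX : T ⊆ X := DraftAux.draft_subset hpref' i
  set t : {x // x ∈ T} → Finset Obj := fun y => S.filter (fun s => r s y.1) with ht
  have hall : ∀ A : Finset {x // x ∈ T}, A.card ≤ (A.biUnion t).card := by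
    intro A
    rcases A.eq_empty_or_nonempty with rfl | hA
    · simp
    obtain ⟨y₀, hy₀A, hmax⟩ := Finset.exists_max_image A (fun y => DraftAux.rk r X y.1) hA
    set M := DraftAux.rk r X y₀.1 + 1 with hM
    have step1 : A.card ≤ (T.filter (fun y => DraftAux.rk r X y < M)).card := by
      have hsub : A.image Subtype.val ⊆ T.filter (fun y => DraftAux.rk r X y < M) := by
        intro x hx
        obtain ⟨y, hy, rfl⟩ := Finset.mem_image.1 hx
        exact Finset.mem_filter.2 ⟨y.2, by have := hmax y hy; omega⟩
      calc A.card = (A.image Subtype.val).card :=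
            (Finset.card_image_of_injOn (fun a _ b _ h => Subtype.ext h)).symm
        _ ≤ _ := Finset.card_le_card hsub
    have step2 : (T.filter (fun y => DraftAux.rk r X y < M)).card
        ≤ (S.filter (fun y => DraftAux.rk r X y < M)).card :=
      DraftAux.count_all hr hpref' i hothers M
    have step3 : S.filter (fun y => DraftAux.rk r X y < M) ⊆ t y₀ := by
      intro s hs
      rcases Finset.mem_filter.1 hs with ⟨hsS, hsrk⟩
      exact Finset.mem_filter.2
        ⟨hsS, DraftAux.rk_le_imp hr (hSX hsS) (hTX y₀.2) (by omega)⟩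
    have step4 : t y₀ ⊆ A.biUnion t := fun s hs => Finset.mem_biUnion.2 ⟨y₀, hy₀A, hs⟩
    calc A.card ≤ _ := step1
      _ ≤ (S.filter (fun y => DraftAux.rk r X y < M)).card := step2
      _ ≤ (t y₀).card := Finset.card_le_card step3
      _ ≤ _ := Finset.card_le_card step4
  obtain ⟨μ0, hμ0inj, hμ0mem⟩ :=
    (Finset.all_card_le_biUnion_card_iff_exists_injective t).1 hall
  refine ⟨fun y => ⟨μ0 y, (Finset.mem_filter.1 (hμ0mem y)).1⟩, ?_, ?_⟩
  · intro a b hab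
    exact hμ0inj (congrArg Subtype.val hab)
  · intro y
    exact (Finset.mem_filter.1 (hμ0mem y)).2
end
end

section
/- Every draft rule φ^π is maxmin strategy-proof: for every available set X, agent i, truthful preference ≿_i, and additive utility function u_i consistent with ≿_i, reporting ≿_i maximizes over reports ≿'_i the quantity min over opponent profiles ≿'_{-i} of u_i(φ^π_i((≿'_i, ≿'_{-i}), X)). -/
open Finset

noncomputable section

section Aux

lemma exists_top {s : Obj → Obj → Prop} (hs : IsLinearOrder Obj s) {X : Finset Obj}
    (hX : X.Nonempty) : ∃ m ∈ X, ∀ x ∈ X, s m x := by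
  haveI := hs
  induction X using Finset.induction with
  | empty => exact absurd hX (by simp)
  | @insert a T ha ih =>
    rcases T.eq_empty_or_nonempty with h | h
    · subst h
      refine ⟨a, Finset.mem_insert_self a _, ?_⟩
      intro x hx
      rcases Finset.mem_insert.mp hx with rfl | hx
      · exact refl_of s x
      · simp at hx
    · obtain ⟨m, hm, hms⟩ := ih h
      rcases total_of s a m with ham | hma
      · refine ⟨a, Finset.mem_insert_self a _, ?_⟩
        intro x hx
        rcases Finset.mem_insert.mp hx with rfl | hx
        · exact refl_of s x
        · exact trans_of s ham (hms x hx)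
      · refine ⟨m, Finset.mem_insert_of_mem hm, ?_⟩
        intro x hx
        rcases Finset.mem_insert.mp hx with rfl | hx
        · exact hma
        · exact hms x hx

lemma topOf_spec {s : Obj → Obj → Prop} (hs : IsLinearOrder Obj s) {X : Finset Obj}
    (hX : X.Nonempty) : topOf s X ∈ X ∧ ∀ x ∈ X, s (topOf s X) x := by
  have h : ∃ m ∈ X, ∀ x ∈ X, s m x := exists_top hs hX
  rw [topOf, dif_pos h]
  exact ⟨h.choose_spec.1, h.choose_spec.2⟩

lemma topOf_eq {s : Obj → Obj → Prop} (hs : IsLinearOrder Obj s) {X : Finset Obj} {m : Obj}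
    (hm : m ∈ X) (hms : ∀ x ∈ X, s m x) : topOf s X = m := by
  haveI := hs
  obtain ⟨h1, h2⟩ := topOf_spec hs ⟨m, hm⟩
  exact antisymm_of s (h2 m hm) (hms _ h1)

/-- an unconditional linear order on `Obj` sorting by decreasing `u`. -/
def wru (u : Obj → ℝ) (x y : Obj) : Prop := u y < u x ∨ (u y = u x ∧ x ≤ y)

instance (u : Obj → ℝ) : IsTrans Obj (wru u) := by
  constructor
  rintro a b c (h1 | ⟨h1, h1'⟩) (h2 | ⟨h2, h2'⟩)
  · exact Or.inl (h2.trans h1)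
  · exact Or.inl (h2 ▸ h1)
  · exact Or.inl (h1 ▸ h2)
  · exact Or.inr ⟨h2.trans h1, h1'.trans h2'⟩

instance (u : Obj → ℝ) : IsAntisymm Obj (wru u) := by
  constructor
  rintro a b (h1 | ⟨h1, h1'⟩) (h2 | ⟨h2, h2'⟩)
  · exact absurd (h1.trans h2) (lt_irrefl _)
  · exact absurd h1 (h2 ▸ lt_irrefl _)
  · exact absurd h2 (h1 ▸ lt_irrefl _)
  · exact le_antisymm h1' h2'

instance (u : Obj → ℝ) : IsTotal Obj (wru u) := by
  constructor
  intro a b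
  rcases lt_trichotomy (u a) (u b) with h | h | h
  · exact Or.inr (Or.inl h)
  · rcases le_total a b with h' | h'
    · exact Or.inl (Or.inr ⟨h.symm, h'⟩)
    · exact Or.inr (Or.inr ⟨h, h'⟩)
  · exact Or.inl (Or.inl h)

open Classical in
noncomputable def sortedL (u : Obj → ℝ) (X : Finset Obj) : List Obj := X.sort (wru u)

noncomputable def elt (u : Obj → ℝ) (X : Finset Obj) (k : ℕ) : Obj := (sortedL u X).getD k 0

lemma sortedL_length (u : Obj → ℝ) (X : Finset Obj) : (sortedL u X).length = X.card := by
  classical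
  exact Finset.length_sort _

lemma sortedL_nodup (u : Obj → ℝ) (X : Finset Obj) : (sortedL u X).Nodup := by
  classical
  exact Finset.sort_nodup _ _

lemma sortedL_mem (u : Obj → ℝ) (X : Finset Obj) (x : Obj) : x ∈ sortedL u X ↔ x ∈ X := by
  classical
  exact Finset.mem_sort _

lemma elt_mem {u : Obj → ℝ} {X : Finset Obj} {k : ℕ} (hk : k < X.card) : elt u X k ∈ X := by
  rw [← sortedL_mem u X]
  rw [elt, List.getD_eq_getElem _ _ (by rw [sortedL_length]; exact hk)]
  exact List.getElem_mem _

lemma elt_anti {u : Obj → ℝ} {X : Finset Obj} {j k : ℕ} (hjk : j ≤ k) (hk : k < X.card) :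
    u (elt u X k) ≤ u (elt u X j) := by
  rcases eq_or_lt_of_le hjk with rfl | hjk'
  · exact le_refl _
  · have hs : List.Pairwise (wru u) (sortedL u X) := by classical exact Finset.pairwise_sort _ _
    have hk' : k < (sortedL u X).length := by rw [sortedL_length]; exact hk
    have hj' : j < (sortedL u X).length := lt_trans (by omega) hk'
    have := List.Pairwise.rel_get_of_lt hs (a := ⟨j, hj'⟩) (b := ⟨k, hk'⟩) hjk'
    rw [elt, elt, List.getD_eq_getElem _ _ hk', List.getD_eq_getElem _ _ hj']
    rcases this with h | ⟨h, _⟩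
    · exact le_of_lt h
    · exact le_of_eq h

lemma elt_inj {u : Obj → ℝ} {X : Finset Obj} {j k : ℕ} (hjk : j ≠ k) (hj : j < X.card)
    (hk : k < X.card) : elt u X j ≠ elt u X k := by
  have hk' : k < (sortedL u X).length := by rw [sortedL_length]; exact hk
  have hj' : j < (sortedL u X).length := by rw [sortedL_length]; exact hj
  rw [elt, elt, List.getD_eq_getElem _ _ hk', List.getD_eq_getElem _ _ hj']
  intro h
  exact hjk (List.Nodup.getElem_inj_iff (sortedL_nodup u X) |>.mp h)

end Aux
section Aux2

lemma elt_image {u : Obj → ℝ} (X : Finset Obj) :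
    (Finset.range X.card).image (elt u X) = X := by
  apply Finset.eq_of_subset_of_card_le
  · intro x hx
    obtain ⟨k, hk, rfl⟩ := Finset.mem_image.mp hx
    exact elt_mem (Finset.mem_range.mp hk)
  · rw [Finset.card_image_of_injOn, Finset.card_range]
    intro a ha b hb hab
    by_contra hne
    exact elt_inj hne (Finset.mem_range.mp ha) (Finset.mem_range.mp hb) hab

lemma initseg {I : Finset ℕ} {g : ℕ} (hcard : I.card = g)
    (hdc : ∀ j k : ℕ, j ≤ k → k ∈ I → j ∈ I) : I = Finset.range g := by
  have hsub : I ⊆ Finset.range g := by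
    intro k hk
    rw [Finset.mem_range]
    by_contra hkg
    push_neg at hkg
    have h1 : Finset.range (k + 1) ⊆ I := fun j hj =>
      hdc j k (Nat.lt_succ_iff.mp (Finset.mem_range.mp hj)) hk
    have := Finset.card_le_card h1
    rw [Finset.card_range, hcard] at this
    omega
  exact Finset.eq_of_subset_of_card_le hsub (by rw [Finset.card_range, hcard])

/-- positions with value above threshold `c` are exactly the first `g` positions. -/
lemma elt_count {u : Obj → ℝ} {X : Finset Obj} {k : ℕ} (hk : k < X.card) (c : ℝ) :
    c < u (elt u X k) ↔ k < (X.filter (fun x => c < u x)).card := by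
  set g := (X.filter (fun x => c < u x)).card with hg
  set I := (Finset.range X.card).filter (fun j => c < u (elt u X j)) with hI
  have hIcard : I.card = g := by
    rw [hg]
    apply Finset.card_bij (fun k _ => elt u X k)
    · intro a ha
      rw [hI, Finset.mem_filter, Finset.mem_range] at ha
      exact Finset.mem_filter.mpr ⟨elt_mem ha.1, ha.2⟩
    · intro a ha b hb hab
      rw [hI, Finset.mem_filter, Finset.mem_range] at ha hb
      by_contra hne
      exact elt_inj hne ha.1 hb.1 hab
    · intro x hx
      rw [Finset.mem_filter] at hx
      have heq := elt_image (u := u) X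
      have hx' : x ∈ (Finset.range X.card).image (elt u X) := by rw [heq]; exact hx.1
      obtain ⟨j, hj, rfl⟩ := Finset.mem_image.mp hx'
      exact ⟨j, Finset.mem_filter.mpr ⟨hj, hx.2⟩, rfl⟩
  have hdc : ∀ j k : ℕ, j ≤ k → k ∈ I → j ∈ I := by
    intro j k hjk hkI
    rw [hI, Finset.mem_filter, Finset.mem_range] at hkI ⊢
    exact ⟨lt_of_le_of_lt hjk hkI.1, lt_of_lt_of_le hkI.2 (elt_anti hjk hkI.1)⟩
  have hIr : I = Finset.range g := initseg hIcard hdc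
  constructor
  · intro h
    have : k ∈ I := Finset.mem_filter.mpr ⟨Finset.mem_range.mpr hk, h⟩
    rw [hIr, Finset.mem_range] at this
    exact this
  · intro h
    have : k ∈ I := by rw [hIr, Finset.mem_range]; exact h
    exact (Finset.mem_filter.mp this).2

lemma rem_subset {n : ℕ} (p : Fin n → Obj → Obj → Prop) (f : ℕ → Fin n) (X : Finset Obj) :
    ∀ k, remaining p f X k ⊆ X
  | 0 => subset_rfl
  | (k + 1) => (Finset.erase_subset _ _).trans (rem_subset p f X k)

lemma rem_mono {n : ℕ} (p : Fin n → Obj → Obj → Prop) (f : ℕ → Fin n) (X : Finset Obj)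
    {j k : ℕ} (h : j ≤ k) : remaining p f X k ⊆ remaining p f X j := by
  induction h with
  | refl => exact subset_rfl
  | step h ih => exact (Finset.erase_subset _ _).trans ih

lemma rem_card {n : ℕ} {p : Fin n → Obj → Obj → Prop} (hp : LinProfile p) (f : ℕ → Fin n)
    (X : Finset Obj) : ∀ k, (remaining p f X k).card = X.card - k := by
  intro k
  induction k with
  | zero => simp [remaining]
  | succ k ih =>
    rcases (remaining p f X k).eq_empty_or_nonempty with h | h
    · rw [remaining, h]
      rw [h] at ih
      simp only [Finset.erase_empty, Finset.card_empty] at *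
      omega
    · have hm := (topOf_spec (hp (f k)) h).1
      rw [remaining, Finset.card_erase_of_mem hm, ih]
      omega

/-- the object picked at step `k`. -/
noncomputable def pk {n : ℕ} (p : Fin n → Obj → Obj → Prop) (f : ℕ → Fin n)
    (X : Finset Obj) (k : ℕ) : Obj := topOf (p (f k)) (remaining p f X k)

lemma pk_mem {n : ℕ} {p : Fin n → Obj → Obj → Prop} (hp : LinProfile p) (f : ℕ → Fin n)
    {X : Finset Obj} {k : ℕ} (hk : k < X.card) : pk p f X k ∈ remaining p f X k := by
  have hne : (remaining p f X k).Nonempty := by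
    rw [← Finset.card_pos, rem_card hp f X k]; omega
  exact (topOf_spec (hp (f k)) hne).1

lemma pk_spec {n : ℕ} {p : Fin n → Obj → Obj → Prop} (hp : LinProfile p) (f : ℕ → Fin n)
    {X : Finset Obj} {k : ℕ} (hk : k < X.card) :
    ∀ x ∈ remaining p f X k, (p (f k)) (pk p f X k) x := by
  have hne : (remaining p f X k).Nonempty := by
    rw [← Finset.card_pos, rem_card hp f X k]; omega
  exact (topOf_spec (hp (f k)) hne).2

lemma pk_ne {n : ℕ} {p : Fin n → Obj → Obj → Prop} (hp : LinProfile p) (f : ℕ → Fin n)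
    {X : Finset Obj} {j k : ℕ} (hjk : j < k) (hk : k < X.card) :
    pk p f X k ≠ pk p f X j := by
  have h1 : pk p f X k ∈ remaining p f X k := pk_mem hp f hk
  have h2 : remaining p f X k ⊆ remaining p f X (j + 1) := rem_mono p f X hjk
  have h3 : pk p f X k ∈ (remaining p f X j).erase (pk p f X j) := h2 h1
  exact (Finset.mem_erase.mp h3).1

lemma pk_mem_X {n : ℕ} {p : Fin n → Obj → Obj → Prop} (hp : LinProfile p) (f : ℕ → Fin n)
    {X : Finset Obj} {k : ℕ} (hk : k < X.card) : pk p f X k ∈ X :=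
  rem_subset p f X k (pk_mem hp f hk)

lemma sum_draft {n : ℕ} {p : Fin n → Obj → Obj → Prop} (hp : LinProfile p) (f : ℕ → Fin n)
    (X : Finset Obj) (i : Fin n) (u : Obj → ℝ) :
    ∑ x ∈ draft p f X i, u x
      = ∑ k ∈ (Finset.range X.card).filter (fun k => f k = i), u (pk p f X k) := by
  rw [draft]
  apply Finset.sum_image
  intro a ha b hb hab
  rw [Finset.mem_coe, Finset.mem_filter, Finset.mem_range] at ha hb
  by_contra hne
  rcases Nat.lt_or_ge a b with h | h
  · exact pk_ne hp f h hb.1 hab.symm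
  · exact pk_ne hp f (by omega) ha.1 hab

end Aux2
section Aux3

lemma u_inj {r : Obj → Obj → Prop} (hr : IsLinearOrder Obj r) {u : Obj → ℝ}
    (hru : ∀ x y, r x y ↔ u y ≤ u x) : Function.Injective u := by
  haveI := hr
  intro a b hab
  exact antisymm_of r ((hru a b).mpr (le_of_eq hab.symm)) ((hru b a).mpr (le_of_eq hab))

lemma topclone {r : Obj → Obj → Prop} (hr : IsLinearOrder Obj r) {u : Obj → ℝ}
    (hru : ∀ x y, r x y ↔ u y ≤ u x) {X : Finset Obj} {k : ℕ} (hk : k < X.card) :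
    topOf r (X \ (Finset.range k).image (elt u X)) = elt u X k := by
  apply topOf_eq hr
  · rw [Finset.mem_sdiff]
    refine ⟨elt_mem hk, ?_⟩
    intro hmem
    obtain ⟨j, hj, hje⟩ := Finset.mem_image.mp hmem
    rw [Finset.mem_range] at hj
    exact elt_inj (Nat.ne_of_lt hj) (lt_trans hj hk) hk hje
  · intro x hx
    rw [Finset.mem_sdiff] at hx
    have hx' : x ∈ (Finset.range X.card).image (elt u X) := by
      rw [elt_image]; exact hx.1
    obtain ⟨j, hj, rfl⟩ := Finset.mem_image.mp hx'
    rw [Finset.mem_range] at hj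
    have hkj : k ≤ j := by
      by_contra h
      exact hx.2 (Finset.mem_image.mpr ⟨j, Finset.mem_range.mpr (by omega), rfl⟩)
    exact (hru _ _).mpr (elt_anti hkj hj)

lemma clone_rem {n : ℕ} {r : Obj → Obj → Prop} (hr : IsLinearOrder Obj r) {u : Obj → ℝ}
    (hru : ∀ x y, r x y ↔ u y ≤ u x) (f : ℕ → Fin n) (X : Finset Obj) :
    ∀ k, remaining (fun _ : Fin n => r) f X k = X \ (Finset.range k).image (elt u X) := by
  intro k
  induction k with
  | zero => simp [remaining]
  | succ k ih =>
    rw [remaining, ih]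
    rcases Nat.lt_or_ge k X.card with hk | hk
    · rw [topclone hr hru hk]
      rw [Finset.range_add_one, Finset.image_insert, Finset.sdiff_insert]
    · have h1 : ∀ m, X.card ≤ m → X \ (Finset.range m).image (elt u X) = ∅ := by
        intro m hm
        rw [Finset.sdiff_eq_empty_iff_subset]
        intro x hx
        have hx' : x ∈ (Finset.range X.card).image (elt u X) := by
          rw [elt_image]; exact hx
        exact Finset.image_subset_image (Finset.range_subset_range.mpr hm) hx'
      rw [h1 k hk, h1 (k + 1) (by omega), Finset.erase_empty]

lemma clone_pk {n : ℕ} {r : Obj → Obj → Prop} (hr : IsLinearOrder Obj r) {u : Obj → ℝ}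
    (hru : ∀ x y, r x y ↔ u y ≤ u x) (f : ℕ → Fin n) {X : Finset Obj} {k : ℕ}
    (hk : k < X.card) : pk (fun _ : Fin n => r) f X k = elt u X k := by
  rw [pk, clone_rem hr hru f X k, topclone hr hru hk]

lemma truthful_pick_ge {n : ℕ} {r : Obj → Obj → Prop} (hr : IsLinearOrder Obj r) {u : Obj → ℝ}
    (hru : ∀ x y, r x y ↔ u y ≤ u x) {p : Fin n → Obj → Obj → Prop} (hp : LinProfile p)
    (f : ℕ → Fin n) {X : Finset Obj} {k : ℕ} (hk : k < X.card) (hfk : p (f k) = r) :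
    u (elt u X k) ≤ u (pk p f X k) := by
  set S := remaining p f X k with hS
  set Top := (Finset.range (k + 1)).image (elt u X) with hTop
  have hTcard : Top.card = k + 1 := by
    rw [hTop, Finset.card_image_of_injOn, Finset.card_range]
    intro a ha b hb hab
    rw [Finset.mem_coe, Finset.mem_range] at ha hb
    by_contra hne
    exact elt_inj hne (by omega) (by omega) hab
  have hTX : Top ⊆ X := by
    intro x hx
    obtain ⟨j, hj, rfl⟩ := Finset.mem_image.mp hx
    rw [Finset.mem_range] at hj
    exact elt_mem (by omega)
  have hScard : S.card = X.card - k := rem_card hp f X k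
  have hUX : S ∪ Top ⊆ X := Finset.union_subset (rem_subset p f X k) hTX
  have hint : (S ∩ Top).Nonempty := by
    rw [← Finset.card_pos]
    have h1 := Finset.card_union_add_card_inter S Top
    have h2 := Finset.card_le_card hUX
    omega
  obtain ⟨x, hx⟩ := hint
  rw [Finset.mem_inter] at hx
  obtain ⟨j, hj, rfl⟩ := Finset.mem_image.mp hx.2
  rw [Finset.mem_range] at hj
  have h3 : u (elt u X k) ≤ u (elt u X j) := elt_anti (by omega) hk
  have h4 : r (pk p f X k) (elt u X j) := by
    have := pk_spec hp f hk (elt u X j) hx.1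
    rwa [hfk] at this
  exact le_trans h3 ((hru _ _).mp h4)

lemma count_sum_le : ∀ (N : ℕ) (A B : Finset ℕ) (v w : ℕ → ℝ), A.card = N → B.card = N →
    (∀ c : ℝ, ((A.filter fun a => c < v a).card ≤ (B.filter fun b => c < w b).card)) →
    ∑ a ∈ A, v a ≤ ∑ b ∈ B, w b := by
  intro N
  induction N with
  | zero =>
    intro A B v w hA hB _
    rw [Finset.card_eq_zero] at hA hB
    subst hA; subst hB; simp
  | succ N ih =>
    intro A B v w hA hB hc
    have hAne : A.Nonempty := Finset.card_pos.mp (by omega)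
    have hBne : B.Nonempty := Finset.card_pos.mp (by omega)
    obtain ⟨a, ha, hamax⟩ := Finset.exists_max_image A v hAne
    obtain ⟨b, hb, hbmax⟩ := Finset.exists_max_image B w hBne
    have hab : v a ≤ w b := by
      by_contra h
      push_neg at h
      have h1 : a ∈ A.filter fun a' => w b < v a' := Finset.mem_filter.mpr ⟨ha, h⟩
      have h2 : (B.filter fun b' => w b < w b').card = 0 := by
        rw [Finset.card_eq_zero, Finset.filter_eq_empty_iff]
        intro x hx
        push_neg
        exact hbmax x hx
      have h3 := hc (w b)
      rw [h2] at h3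
      have : 0 < (A.filter fun a' => w b < v a').card := Finset.card_pos.mpr ⟨a, h1⟩
      omega
    have hrec : ∑ x ∈ A.erase a, v x ≤ ∑ x ∈ B.erase b, w x := by
      apply ih _ _ v w (by rw [Finset.card_erase_of_mem ha, hA]; rfl)
        (by rw [Finset.card_erase_of_mem hb, hB]; rfl)
      intro c
      rcases lt_or_ge c (v a) with hca | hca
      · have haf : a ∈ A.filter fun a' => c < v a' := Finset.mem_filter.mpr ⟨ha, hca⟩
        have hbf : b ∈ B.filter fun b' => c < w b' := Finset.mem_filter.mpr ⟨hb, lt_of_lt_of_le hca hab⟩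
        rw [Finset.filter_erase, Finset.filter_erase, Finset.card_erase_of_mem haf,
          Finset.card_erase_of_mem hbf]
        have := hc c
        omega
      · have : ((A.erase a).filter fun a' => c < v a').card = 0 := by
          rw [Finset.card_eq_zero, Finset.filter_eq_empty_iff]
          intro x hx
          push_neg
          exact le_trans (hamax x (Finset.mem_of_mem_erase hx)) hca
        rw [this]
        omega
    calc ∑ x ∈ A, v x = v a + ∑ x ∈ A.erase a, v x := (Finset.add_sum_erase A v ha).symm
      _ ≤ w b + ∑ x ∈ B.erase b, w x := add_le_add hab hrec
      _ = ∑ x ∈ B, w x := Finset.add_sum_erase B w hb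

end Aux3
section Aux4

lemma misreport_count {n : ℕ} {r r' : Obj → Obj → Prop} (hr : IsLinearOrder Obj r)
    (hr' : IsLinearOrder Obj r') {u : Obj → ℝ} (hru : ∀ x y, r x y ↔ u y ≤ u x)
    (f : ℕ → Fin n) (i : Fin n) (X : Finset Obj)
    (hq : LinProfile (Function.update (fun _ : Fin n => r) i r')) (c : ℝ) :
    ((((Finset.range X.card).filter (fun k => f k = i)).filter
        (fun k => c < u (pk (Function.update (fun _ : Fin n => r) i r') f X k))).card ≤
      (((Finset.range X.card).filter (fun k => f k = i)).filter
        (fun k => c < u (elt u X k))).card) := by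
  set q : Fin n → Obj → Obj → Prop := Function.update (fun _ : Fin n => r) i r' with hqdef
  set T := (Finset.range X.card).filter (fun k => f k = i) with hT
  set g := (X.filter (fun x => c < u x)).card with hg
  have hTcard : ∀ k ∈ T, k < X.card := by
    intro k hk
    rw [hT, Finset.mem_filter, Finset.mem_range] at hk
    exact hk.1
  have hTi : ∀ k ∈ T, f k = i := by
    intro k hk
    rw [hT, Finset.mem_filter] at hk
    exact hk.2
  have hRHS : T.filter (fun k => c < u (elt u X k)) = T.filter (fun k => k < g) := by
    apply Finset.filter_congr
    intro k hk
    exact elt_count (hTcard k hk) c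
  rw [hRHS]
  set γ := (T.filter (fun k => k < g)).card with hγ
  set GP := T.filter (fun k => c < u (pk q f X k)) with hGP
  rcases GP.eq_empty_or_nonempty with hGPe | hGPne
  · rw [hGPe, Finset.card_empty]; exact Nat.zero_le _
  set K := GP.max' hGPne with hK
  have hKGP : K ∈ GP := GP.max'_mem hGPne
  have hKT : K ∈ T := Finset.mem_of_mem_filter _ hKGP
  have hKcard : K < X.card := hTcard K hKT
  have hKgood : c < u (pk q f X K) := by
    rw [hGP, Finset.mem_filter] at hKGP
    exact hKGP.2
  have hpkKX : pk q f X K ∈ X := pk_mem_X hq f hKcard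
  have hpkKGood : pk q f X K ∈ X.filter (fun x => c < u x) :=
    Finset.mem_filter.mpr ⟨hpkKX, hKgood⟩
  have hg1 : 1 ≤ g := by
    rw [hg]
    exact Finset.card_pos.mpr ⟨_, hpkKGood⟩
  set O := (Finset.range K).filter (fun j => ¬ f j = i) with hO
  set GP' := GP.erase K with hGP'
  have hltK : ∀ j ∈ O ∪ GP', j < K := by
    intro j hj
    rcases Finset.mem_union.mp hj with hj | hj
    · exact Finset.mem_range.mp (Finset.mem_of_mem_filter _ hj)
    · rw [hGP', Finset.mem_erase] at hj
      exact lt_of_le_of_ne (GP.le_max' j hj.2) hj.1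
  have hmap : ∀ j ∈ O ∪ GP', pk q f X j ∈ (X.filter (fun x => c < u x)).erase (pk q f X K) := by
    intro j hj
    have hjK : j < K := hltK j hj
    have hjcard : j < X.card := lt_trans hjK hKcard
    rw [Finset.mem_erase]
    refine ⟨(pk_ne hq f hjK hKcard).symm, ?_⟩
    rw [Finset.mem_filter]
    refine ⟨pk_mem_X hq f hjcard, ?_⟩
    rcases Finset.mem_union.mp hj with hj' | hj'
    · -- opponent's turn: it picks the `r`-best remaining object
      have hfj : ¬ f j = i := by
        rw [hO, Finset.mem_filter] at hj'
        exact hj'.2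
      have hqfj : q (f j) = r := by
        rw [hqdef, Function.update_apply, if_neg hfj]
      have hmem : pk q f X K ∈ remaining q f X j :=
        rem_mono q f X (le_of_lt hjK) (pk_mem hq f hKcard)
      have := pk_spec hq f hjcard (pk q f X K) hmem
      rw [hqfj] at this
      exact lt_of_lt_of_le hKgood ((hru _ _).mp this)
    · rw [hGP', Finset.mem_erase, hGP, Finset.mem_filter] at hj'
      exact hj'.2.2
  have hinj : Set.InjOn (fun j => pk q f X j) (O ∪ GP' : Finset ℕ) := by
    intro a ha b hb hab
    have ha' : a < X.card := lt_trans (hltK a ha) hKcard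
    have hb' : b < X.card := lt_trans (hltK b hb) hKcard
    by_contra hne
    rcases Nat.lt_or_ge a b with h | h
    · exact pk_ne hq f h hb' hab.symm
    · exact pk_ne hq f (by omega) ha' hab
  have hcount : (O ∪ GP').card ≤ g - 1 := by
    have h1 := Finset.card_le_card_of_injOn _ hmap hinj
    rwa [Finset.card_erase_of_mem hpkKGood, ← hg] at h1
  have hdisj : Disjoint O GP' := by
    rw [Finset.disjoint_left]
    intro a ha ha'
    have h1 : ¬ f a = i := by
      rw [hO, Finset.mem_filter] at ha
      exact ha.2
    exact h1 (hTi a (Finset.mem_of_mem_filter _ (Finset.mem_of_mem_erase ha')))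
  have hunion : (O ∪ GP').card = O.card + GP'.card := Finset.card_union_of_disjoint hdisj
  set β := ((Finset.range K).filter (fun j => f j = i)).card with hβ
  have hOβ : β + O.card = K := by
    rw [hβ, hO]
    rw [Finset.card_filter_add_card_filter_not, Finset.card_range]
  have hGPcard : GP.card = GP'.card + 1 := by
    rw [hGP', Finset.card_erase_of_mem hKGP]
    have : 0 < GP.card := Finset.card_pos.mpr hGPne
    omega
  rcases Nat.lt_or_ge K g with hKg | hKg
  · -- all of GP sits among the first g turns
    apply Finset.card_le_card
    intro j hj
    rw [Finset.mem_filter]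
    refine ⟨Finset.mem_of_mem_filter _ hj, ?_⟩
    have := GP.le_max' j hj
    omega
  · -- K ≥ g
    have hβγ : β ≤ γ + (K - g) := by
      have hsub : (Finset.range K).filter (fun j => f j = i) ⊆
          (T.filter (fun k => k < g)) ∪ Finset.Ico g K := by
        intro j hj
        rw [Finset.mem_filter, Finset.mem_range] at hj
        rcases Nat.lt_or_ge j g with h | h
        · apply Finset.mem_union_left
          rw [Finset.mem_filter, hT, Finset.mem_filter, Finset.mem_range]
          exact ⟨⟨lt_trans hj.1 hKcard, hj.2⟩, h⟩
        · exact Finset.mem_union_right _ (Finset.mem_Ico.mpr ⟨h, hj.1⟩)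
      calc β ≤ ((T.filter (fun k => k < g)) ∪ Finset.Ico g K).card := Finset.card_le_card hsub
        _ ≤ γ + (K - g) := by
            rw [hγ]
            have := Finset.card_union_le (T.filter (fun k => k < g)) (Finset.Ico g K)
            rwa [Nat.card_Ico] at this
    omega

end Aux4
theorem draft_maxmin_strategyproof {n : ℕ} (hn : 0 < n) (π : Equiv.Perm (Fin n))
    (X : Finset Obj) (hX : X.Nonempty) (i : Fin n)
    (r : Obj → Obj → Prop) (hr : IsLinearOrder Obj r)
    (u : Obj → ℝ) (hupos : ∀ x, 0 < u x)
    (humono : ∀ x y : Obj, r x y ↔ u y ≤ u x) :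
    ∀ r' : Obj → Obj → Prop, IsLinearOrder Obj r' →
      sInf {v : ℝ | ∃ p : Fin n → Obj → Obj → Prop, LinProfile p ∧
          v = ∑ x ∈ draftPi hn (Function.update p i r') π X i, u x} ≤
      sInf {v : ℝ | ∃ p : Fin n → Obj → Obj → Prop, LinProfile p ∧
          v = ∑ x ∈ draftPi hn (Function.update p i r) π X i, u x} := by
  intro r' hr'
  set f : ℕ → Fin n := roundRobin hn π with hf
  set T := (Finset.range X.card).filter (fun k => f k = i) with hT
  set Vstar := ∑ k ∈ T, u (elt u X k) with hVstar
  set S1 := {v : ℝ | ∃ p : Fin n → Obj → Obj → Prop, LinProfile p ∧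
      v = ∑ x ∈ draftPi hn (Function.update p i r') π X i, u x} with hS1
  set S2 := {v : ℝ | ∃ p : Fin n → Obj → Obj → Prop, LinProfile p ∧
      v = ∑ x ∈ draftPi hn (Function.update p i r) π X i, u x} with hS2
  have hconst : LinProfile (fun _ : Fin n => r) := fun _ => hr
  have hTcard : ∀ k ∈ T, k < X.card := by
    intro k hk
    rw [hT, Finset.mem_filter, Finset.mem_range] at hk
    exact hk.1
  -- the truthful clone value
  have hclone : ∑ x ∈ draftPi hn (fun _ : Fin n => r) π X i, u x = Vstar := by
    rw [draftPi, ← hf, sum_draft hconst f X i u, ← hT, hVstar]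
    apply Finset.sum_congr rfl
    intro k hk
    rw [clone_pk hr humono f (hTcard k hk)]
  -- claim A : any truthful outcome is at least Vstar
  have hA : ∀ v ∈ S2, Vstar ≤ v := by
    rintro v ⟨p, hp, rfl⟩
    have hq : LinProfile (Function.update p i r) := by
      intro j
      rcases eq_or_ne j i with rfl | hne
      · rw [Function.update_self]; exact hr
      · rw [Function.update_of_ne hne]; exact hp j
    rw [draftPi, ← hf, sum_draft hq f X i u, ← hT, hVstar]
    apply Finset.sum_le_sum
    intro k hk
    have hfk : Function.update p i r (f k) = r := by
      rw [hT, Finset.mem_filter] at hk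
      rw [hk.2, Function.update_self]
    exact truthful_pick_ge hr humono hq f (hTcard k hk) hfk
  -- claim B : the misreport against clones yields at most Vstar
  have hqmis : LinProfile (Function.update (fun _ : Fin n => r) i r') := by
    intro j
    rcases eq_or_ne j i with rfl | hne
    · rw [Function.update_self]; exact hr'
    · rw [Function.update_of_ne hne]; exact hr
  have hB : ∑ x ∈ draftPi hn (Function.update (fun _ : Fin n => r) i r') π X i, u x ≤ Vstar := by
    rw [draftPi, ← hf, sum_draft hqmis f X i u, ← hT, hVstar]
    exact count_sum_le T.card T T _ _ rfl rfl (misreport_count hr hr' humono f i X hqmis)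
  have hmem1 : (∑ x ∈ draftPi hn (Function.update (fun _ : Fin n => r) i r') π X i, u x) ∈ S1 :=
    ⟨fun _ => r, hconst, rfl⟩
  have hmem2 : Vstar ∈ S2 := by
    refine ⟨fun _ => r, hconst, ?_⟩
    rw [← hclone]
    congr 1
    rw [Function.update_eq_self]
  have hbdd : BddBelow S1 := by
    refine ⟨0, ?_⟩
    rintro v ⟨p, hp, rfl⟩
    exact Finset.sum_nonneg fun x _ => le_of_lt (hupos x)
  calc sInf S1 ≤ ∑ x ∈ draftPi hn (Function.update (fun _ : Fin n => r) i r') π X i, u x :=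
        csInf_le hbdd hmem1
    _ ≤ Vstar := hB
    _ ≤ sInf S2 := le_csInf ⟨Vstar, hmem2⟩ hA
end
end

section
/- If an allocation rule on the domain with unacceptable objects satisfies individual rationality, truncation-proofness, and extension-proofness, then it satisfies truncation invariance: whenever ≿'_i is a truncation of ≿_i with φ_i(≿, X) ⊆ U(≿'_i), one has φ_i((≿'_i, ≿_{-i}), X) = φ_i(≿, X). -/
open Finset

noncomputable section

/-- A preference in the domain with unacceptable objects: a relation on `Option Obj`,
where `none` is the null object ω.  `x` is acceptable at `r` iff `r (some x) none`. -/
abbrev PrefU := Option Obj → Option Obj → Prop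

def LinProfileU {n : ℕ} (pref : Fin n → PrefU) : Prop :=
  ∀ i, IsLinearOrder (Option Obj) (pref i)

def IsAllocU {n : ℕ} (A : Fin n → Finset Obj) (X : Finset Obj) : Prop :=
  (∀ i, A i ⊆ X) ∧ ∀ i j, i ≠ j → Disjoint (A i) (A j)

/-- Pairwise dominance extension ignoring unacceptable objects: an injection from the
acceptable part of `T` into the acceptable part of `S` that weakly improves each element. -/
def PDA (r : PrefU) (S T : Finset Obj) : Prop :=
  ∃ μ : {x : Obj // x ∈ T ∧ r (some x) none} → {x : Obj // x ∈ S ∧ r (some x) none},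
    Function.Injective μ ∧ ∀ x, r (some (μ x).1) (some x.1)

/-- `r'` is a truncation of `r`: the acceptable set of `r'` is an upper contour set
`U(r, x)` of some object `x` acceptable at `r`, and the two orders agree on it. -/
def Truncation (r' r : PrefU) : Prop :=
  (∃ x : Obj, r (some x) none ∧
    ∀ y : Obj, (r' (some y) none ↔ r (some y) (some x))) ∧
  ∀ y z : Obj, r' (some y) none → r' (some z) none →
    (r' (some y) (some z) ↔ r (some y) (some z))

/-- Auxiliary: a finite nonempty set has a greatest element w.r.t. a total transitive
relation. -/
lemma exists_greatest_aux (R : Obj → Obj → Prop)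
    (htrans : ∀ a b c, R a b → R b c → R a c)
    (htot : ∀ a b, R a b ∨ R b a) :
    ∀ s : Finset Obj, s.Nonempty → ∃ m ∈ s, ∀ x ∈ s, R m x := by
  intro s
  induction s using Finset.induction_on with
  | empty => intro h; simp at h
  | @insert a t ha ih =>
    intro _
    rcases t.eq_empty_or_nonempty with rfl | ht
    · refine ⟨a, Finset.mem_insert_self _ _, ?_⟩
      intro x hx
      simp only [Finset.mem_insert, Finset.notMem_empty, or_false] at hx
      subst hx
      rcases htot x x with h | h <;> exact h
    · obtain ⟨m, hm, hmax⟩ := ih ht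
      rcases htot a m with h | h
      · refine ⟨a, Finset.mem_insert_self _ _, ?_⟩
        intro x hx
        rcases Finset.mem_insert.1 hx with rfl | hx
        · rcases htot x x with h' | h' <;> exact h'
        · exact htrans _ _ _ h (hmax x hx)
      · refine ⟨m, Finset.mem_insert_of_mem hm, ?_⟩
        intro x hx
        rcases Finset.mem_insert.1 hx with rfl | hx
        · exact h
        · exact hmax x hx

/-- Auxiliary: an injective self-map of a finite set that weakly improves every element
w.r.t. a linear-order-like relation is the identity. -/
lemma improving_fix_aux (R : Obj → Obj → Prop)
    (htrans : ∀ a b c, R a b → R b c → R a c)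
    (hanti : ∀ a b, R a b → R b a → a = b)
    (htot : ∀ a b, R a b ∨ R b a) :
    ∀ s : Finset Obj, ∀ g : Obj → Obj, (∀ x ∈ s, g x ∈ s) →
      Set.InjOn g ↑s → (∀ x ∈ s, R (g x) x) → ∀ x ∈ s, g x = x := by
  intro s
  induction s using Finset.strongInduction with
  | _ s ih =>
    intro g hmap hinj himp x hx
    obtain ⟨m, hm, hmax⟩ := exists_greatest_aux R htrans htot s ⟨x, hx⟩
    have hgm : g m = m := hanti _ _ (himp m hm) (hmax _ (hmap m hm))
    by_cases hxm : x = m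
    · subst hxm; exact hgm
    · have hsub : s.erase m ⊂ s := Finset.erase_ssubset hm
      refine ih _ hsub g ?_ ?_ ?_ x (Finset.mem_erase.2 ⟨hxm, hx⟩)
      · intro y hy
        have hy' := Finset.mem_erase.1 hy
        refine Finset.mem_erase.2 ⟨?_, hmap y hy'.2⟩
        intro hgym
        exact hy'.1 (hinj (Finset.mem_coe.2 hy'.2) (Finset.mem_coe.2 hm)
          (by rw [hgym, hgm]))
      · exact hinj.mono (by exact_mod_cast Finset.erase_subset m s)
      · intro y hy; exact himp y (Finset.mem_erase.1 hy).2

theorem IR_TP_EP_implies_TI {n : ℕ} (hn : 2 ≤ n)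
    (φ : (Fin n → PrefU) → Finset Obj → Fin n → Finset Obj)
    (hvalid : ∀ pref, LinProfileU pref → ∀ X : Finset Obj, X.Nonempty →
      IsAllocU (φ pref X) X)
    -- individual rationality: only acceptable objects are ever assigned
    (hIR : ∀ pref, LinProfileU pref → ∀ X : Finset Obj, X.Nonempty →
      ∀ i : Fin n, ∀ y ∈ φ pref X i, (pref i) (some y) none)
    -- truncation-proofness
    (hTP : ∀ pref, LinProfileU pref → ∀ X : Finset Obj, X.Nonempty →
      ∀ i : Fin n, ∀ r' : PrefU, IsLinearOrder (Option Obj) r' →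
        Truncation r' (pref i) →
        PDA (pref i) (φ pref X i) (φ (Function.update pref i r') X i))
    -- extension-proofness
    (hEP : ∀ pref, LinProfileU pref → ∀ X : Finset Obj, X.Nonempty →
      ∀ i : Fin n, ∀ r' : PrefU, IsLinearOrder (Option Obj) r' →
        Truncation (pref i) r' →
        PDA (pref i) (φ pref X i) (φ (Function.update pref i r') X i)) :
    -- truncation invariance
    ∀ pref, LinProfileU pref → ∀ X : Finset Obj, X.Nonempty →
      ∀ i : Fin n, ∀ r' : PrefU, IsLinearOrder (Option Obj) r' →
        Truncation r' (pref i) →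
        (∀ y ∈ φ pref X i, r' (some y) none) →
        φ (Function.update pref i r') X i = φ pref X i := by
  classical
  intro pref hlin X hX i r' hr' htr hsubA
  set pref' := Function.update pref i r' with hpref'
  have hpi : pref' i = r' := Function.update_self i r' pref
  have hlin' : LinProfileU pref' := by
    intro j
    by_cases hj : j = i
    · subst hj; rw [hpi]; exact hr'
    · rw [hpref', Function.update_of_ne hj]; exact hlin j
  have hback : Function.update pref' i (pref i) = pref := by
    rw [hpref', Function.update_idem, Function.update_eq_self]
  -- linear order facts for pref i
  haveI hLO := hlin i
  have htrans : ∀ a b c : Option Obj, pref i a b → pref i b c → pref i a c :=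
    fun a b c hab hbc => Trans.trans hab hbc
  have hanti : ∀ a b : Option Obj, pref i a b → pref i b a → a = b :=
    fun a b hab hba => antisymm hab hba
  have htot : ∀ a b : Option Obj, pref i a b ∨ pref i b a :=
    fun a b => total_of (pref i) a b
  set A := φ pref X i with hA
  set B := φ pref' X i with hB
  obtain ⟨⟨x0, hx0, hiff⟩, hagree⟩ := htr
  -- acceptability facts
  have hA_P : ∀ y ∈ A, pref i (some y) none := fun y hy => hIR pref hlin X hX i y hy
  have hB_R : ∀ y ∈ B, r' (some y) none := by
    intro y hy
    have := hIR pref' hlin' X hX i y hy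
    rwa [hpi] at this
  have hB_P : ∀ y ∈ B, pref i (some y) none := by
    intro y hy
    exact htrans _ _ _ ((hiff y).1 (hB_R y hy)) hx0
  -- the two PDA injections
  obtain ⟨μ, hμinj, hμimp⟩ := hTP pref hlin X hX i r' hr' ⟨⟨x0, hx0, hiff⟩, hagree⟩
  have hEP' := hEP pref' hlin' X hX i (pref i) (hlin i)
    (by rw [hpi]; exact ⟨⟨x0, hx0, hiff⟩, hagree⟩)
  rw [hback, hpi] at hEP'
  obtain ⟨ν, hνinj, hνimp⟩ := hEP'
  -- μ : {x // x ∈ B ∧ pref i (some x) none} → {x // x ∈ A ∧ pref i (some x) none}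
  -- ν : {x // x ∈ A ∧ r' (some x) none} → {x // x ∈ B ∧ r' (some x) none}
  -- the composed self-map on A
  set g : Obj → Obj := fun x =>
    if h : x ∈ A then
      (μ ⟨(ν ⟨x, h, hsubA x h⟩).1, (ν ⟨x, h, hsubA x h⟩).2.1,
          hB_P _ (ν ⟨x, h, hsubA x h⟩).2.1⟩).1
    else x with hg
  have hgval : ∀ x (h : x ∈ A), g x =
      (μ ⟨(ν ⟨x, h, hsubA x h⟩).1, (ν ⟨x, h, hsubA x h⟩).2.1,
          hB_P _ (ν ⟨x, h, hsubA x h⟩).2.1⟩).1 := by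
    intro x h; simp only [hg, dif_pos h]
  have hmap : ∀ x ∈ A, g x ∈ A := by
    intro x h
    rw [hgval x h]
    exact (μ _).2.1
  -- g weakly improves w.r.t. pref i restricted to some
  have hνA : ∀ x (h : x ∈ A), pref i (some (ν ⟨x, h, hsubA x h⟩).1) (some x) := by
    intro x h
    have h1 : r' (some (ν ⟨x, h, hsubA x h⟩).1) (some x) := hνimp ⟨x, h, hsubA x h⟩
    exact (hagree _ _ ((ν ⟨x, h, hsubA x h⟩).2.2) (hsubA x h)).1 h1
  have himp : ∀ x ∈ A, pref i (some (g x)) (some x) := by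
    intro x h
    rw [hgval x h]
    exact htrans _ _ _ (hμimp _) (hνA x h)
  have hinj : Set.InjOn g ↑A := by
    intro x1 hx1 x2 hx2 heq
    have h1 : x1 ∈ A := hx1
    have h2 : x2 ∈ A := hx2
    rw [hgval x1 h1, hgval x2 h2] at heq
    have heq2 := hμinj (Subtype.ext heq)
    have hval := congrArg Subtype.val heq2
    have heq3 : (ν ⟨x1, h1, hsubA x1 h1⟩) = (ν ⟨x2, h2, hsubA x2 h2⟩) :=
      Subtype.ext hval
    have heq4 := hνinj heq3
    exact congrArg Subtype.val heq4
  have hfix : ∀ x ∈ A, g x = x := by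
    refine improving_fix_aux (fun a b => pref i (some a) (some b)) ?_ ?_ ?_ A g hmap hinj himp
    · exact fun a b c hab hbc => htrans _ _ _ hab hbc
    · exact fun a b hab hba => by
        have := hanti _ _ hab hba
        exact Option.some_injective _ this
    · exact fun a b => htot (some a) (some b)
  -- hence ν is the identity on A, so A ⊆ B
  have hAB : A ⊆ B := by
    intro x h
    have hfx := hfix x h
    rw [hgval x h] at hfx
    set y := (ν ⟨x, h, hsubA x h⟩).1 with hy
    have h1 : pref i (some x) (some y) := by
      have := hμimp ⟨y, (ν ⟨x, h, hsubA x h⟩).2.1, hB_P _ (ν ⟨x, h, hsubA x h⟩).2.1⟩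
      rwa [hfx] at this
    have h2 : pref i (some y) (some x) := hνA x h
    have hxy : x = y := Option.some_injective _ (hanti _ _ h1 h2)
    rw [hxy]
    exact (ν ⟨x, h, hsubA x h⟩).2.1
  -- card B ≤ card A via μ
  have hcard : B.card ≤ A.card := by
    set f : Obj → Obj := fun y =>
      if h : y ∈ B then (μ ⟨y, h, hB_P y h⟩).1 else y with hf
    refine Finset.card_le_card_of_injOn f ?_ ?_
    · intro y hy
      simp only [hf, dif_pos (show y ∈ B from hy), Finset.mem_coe]
      exact (μ _).2.1
    · intro y1 hy1 y2 hy2 heq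
      have h1 : y1 ∈ B := hy1
      have h2 : y2 ∈ B := hy2
      simp only [hf, dif_pos h1, dif_pos h2] at heq
      exact congrArg Subtype.val (hμinj (Subtype.ext heq))
  exact (Finset.eq_of_subset_of_card_le hAB hcard).symm
end
end
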